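/- For any positive integer m and even positive integer k, S^{(m)}((2m)^k) = (2/(2m+1)) · Σ_{l=1}^{m} (tan(πl/(2m+1)))^k. -/

import Mathlib

open Real Finset

def S (m x : ℕ) : ℤ :=
  ∑ n ∈ Finset.range x, if (2 * m + 1) ∣ n then (-1 : ℤ) ^ ((Nat.digits (2 * m) n).sum) else 0

lemma digitsum_add (q a b : ℕ) (hq : 1 < q) (ha : a < q) :
    (Nat.digits q (a + q * b)).sum = a + (Nat.digits q b).sum := by
  rcases Nat.eq_zero_or_pos (a + q * b) with h | h
  · have ha0 : a = 0 := by omega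
    have hb0 : b = 0 := by
      rcases Nat.mul_eq_zero.mp (by omega : q * b = 0) with h' | h' <;> omega
    simp [ha0, hb0]
  · rw [Nat.digits_def' hq h]
    have h1 : (a + q * b) % q = a := by
      rw [Nat.add_mul_mod_self_left, Nat.mod_eq_of_lt ha]
    have h2 : (a + q * b) / q = b := by
      rw [Nat.add_mul_div_left _ _ (by omega : 0 < q), Nat.div_eq_of_lt ha]; omega
    simp [h1, h2]

lemma sum_range_mul_eq {M : Type*} [AddCommMonoid M] (q r : ℕ) (f : ℕ → M) :
    ∑ n ∈ range (q * r), f n = ∑ b ∈ range r, ∑ a ∈ range q, f (a + q * b) := by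
  induction r with
  | zero => simp
  | succ r ih =>
    rw [Nat.mul_succ, Finset.sum_range_add, ih, Finset.sum_range_succ]
    congr 1
    exact Finset.sum_congr rfl fun a _ => by rw [add_comm (q*r) a]

lemma F_prod (q : ℕ) (hq : 1 < q) (k : ℕ) (z : ℂ) :
    ∑ n ∈ range (q ^ k), (-1 : ℂ) ^ ((Nat.digits q n).sum) * z ^ n
      = ∏ i ∈ range k, ∑ d ∈ range q, (-1 : ℂ) ^ d * (z ^ q ^ i) ^ d := by
  induction k generalizing z with
  | zero => simp
  | succ k ih =>
    rw [Finset.prod_range_succ', pow_succ' q k, sum_range_mul_eq]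
    have h1 : ∀ i ∈ range k,
        (∑ d ∈ range q, (-1 : ℂ) ^ d * (z ^ q ^ (i+1)) ^ d)
          = ∑ d ∈ range q, (-1 : ℂ) ^ d * ((z ^ q) ^ q ^ i) ^ d := by
      intro i _
      rw [pow_succ' q i, pow_mul]
    rw [Finset.prod_congr rfl h1, ← ih (z ^ q)]
    rw [Finset.sum_mul]
    refine Finset.sum_congr rfl fun b _ => ?_
    rw [Finset.mul_sum]
    refine Finset.sum_congr rfl fun a ha => ?_
    rw [digitsum_add q a b hq (Finset.mem_range.mp ha), pow_add, pow_add, pow_mul, pow_zero]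
    ring

lemma root_sum (p : ℕ) (ζ : ℂ) (hζ : IsPrimitiveRoot ζ p) (n : ℕ) :
    ∑ j ∈ range p, (ζ ^ n) ^ j = if p ∣ n then (p : ℂ) else 0 := by
  by_cases h : p ∣ n
  · rw [if_pos h, (hζ.pow_eq_one_iff_dvd n).2 h]
    simp
  · rw [if_neg h]
    have h1 : ζ ^ n ≠ 1 := fun e => h ((hζ.pow_eq_one_iff_dvd n).1 e)
    rw [geom_sum_eq h1]
    have h2 : (ζ ^ n) ^ p = 1 := by
      rw [← pow_mul, mul_comm, pow_mul, hζ.pow_eq_one, one_pow]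
    rw [h2, sub_self, zero_div]

lemma prod_ite_even {X Y : ℂ} (t : ℕ) :
    ∏ i ∈ range (2 * t), (if Even i then X else Y) = (X * Y) ^ t := by
  induction t with
  | zero => simp
  | succ t ih =>
    have h : 2 * (t + 1) = (2 * t) + 1 + 1 := by ring
    rw [h, Finset.prod_range_succ, Finset.prod_range_succ, ih,
      if_pos (even_two_mul t), if_neg (by simp [Nat.even_add_one, Nat.even_add_one]), pow_succ]
    ring

lemma pow_q_pow {p q : ℕ} (hpq : q + 1 = p) (z : ℂ) (hz : z ^ p = 1) (i : ℕ) :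
    z ^ q ^ i = if Even i then z else z⁻¹ := by
  have hz0 : z ≠ 0 := by
    intro h; rw [h, zero_pow (by omega)] at hz; exact one_ne_zero hz.symm
  have hq : z ^ q = z⁻¹ := by
    field_simp
    rw [← pow_succ, hpq, hz]
  induction i with
  | zero => simp
  | succ i ih =>
    rw [pow_succ q i, pow_mul, ih]
    by_cases h : Even i
    · rw [if_pos h, if_neg (by simp [Nat.even_add_one, h]), hq]
    · rw [if_neg h, if_pos (by simp [Nat.even_add_one, h]), inv_pow, hq, inv_inv]

lemma G_eq (q : ℕ) (hq : Even q) (z : ℂ) (hz : z ≠ -1) :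
    ∑ d ∈ range q, (-1 : ℂ) ^ d * z ^ d = (1 - z ^ q) / (1 + z) := by
  have hden : (1 : ℂ) + z ≠ 0 := fun h => hz (by linear_combination h)
  have h2 : (-z : ℂ) ≠ 1 := fun h => hz (by linear_combination -h)
  have h1 : ∀ d : ℕ, (-1 : ℂ) ^ d * z ^ d = (-z) ^ d := fun d => (neg_pow z d).symm
  simp_rw [h1]
  rw [geom_sum_eq h2, hq.neg_pow]
  rw [div_eq_div_iff (fun h => h2 (by linear_combination h)) hden]
  ring

lemma ne_neg_one {p : ℕ} (hp : Odd p) (z : ℂ) (hz : z ^ p = 1) : z ≠ -1 := by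
  intro h
  rw [h, hp.neg_pow, one_pow] at hz
  exact (by norm_num : (-1 : ℂ) ≠ 1) hz

lemma G_mul (m : ℕ) (a : ℝ) (hca : Real.cos a ≠ 0)
    (z : ℂ) (hz : z = Complex.exp ((2 * a : ℝ) * Complex.I)) (hz1 : z ^ (2 * m + 1) = 1) :
    (∑ d ∈ range (2 * m), (-1 : ℂ) ^ d * z ^ d) *
      (∑ d ∈ range (2 * m), (-1 : ℂ) ^ d * (z⁻¹) ^ d)
      = ((Real.tan a ^ 2 : ℝ) : ℂ) := by
  have hodd : Odd (2 * m + 1) := odd_two_mul_add_one m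
  have hz0 : z ≠ 0 := by
    intro h; rw [h, zero_pow (by omega)] at hz1; exact one_ne_zero hz1.symm
  have hzi1 : (z⁻¹) ^ (2 * m + 1) = 1 := by rw [inv_pow, hz1, inv_one]
  have hne : z ≠ -1 := ne_neg_one hodd z hz1
  have hnei : z⁻¹ ≠ -1 := ne_neg_one hodd z⁻¹ hzi1
  have hq : z ^ (2 * m) = z⁻¹ := by
    field_simp
    rw [← pow_succ, hz1]
  have hqi : (z⁻¹) ^ (2 * m) = z := by rw [inv_pow, hq, inv_inv]
  rw [G_eq _ (even_two_mul m) z hne, G_eq _ (even_two_mul m) z⁻¹ hnei, hq, hqi]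
  have hcos : z + z⁻¹ = 2 * ((Real.cos (2 * a) : ℝ) : ℂ) := by
    rw [hz, ← Complex.exp_neg,
      show -(((2 * a : ℝ) : ℂ) * Complex.I) = ((-(2 * a) : ℝ) : ℂ) * Complex.I by push_cast; ring,
      Complex.exp_mul_I, Complex.exp_mul_I]
    push_cast [Complex.ofReal_cos, Complex.ofReal_sin]
    rw [Complex.cos_neg, Complex.sin_neg]
    ring
  have hden : (1 : ℂ) + z ≠ 0 := fun h => hne (by linear_combination h)
  have hdeni : (1 : ℂ) + z⁻¹ ≠ 0 := fun h => hnei (by linear_combination h)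
  rw [div_mul_div_comm]
  have hdd : ((1 : ℂ) + z) * (1 + z⁻¹) ≠ 0 := mul_ne_zero hden hdeni
  rw [div_eq_iff hdd]
  have htan : Real.tan a ^ 2 * (2 + 2 * Real.cos (2 * a)) = 2 - 2 * Real.cos (2 * a) := by
    rw [Real.tan_eq_sin_div_cos, div_pow]
    rw [div_mul_eq_mul_div, div_eq_iff (pow_ne_zero 2 hca)]
    rw [Real.cos_two_mul]
    nlinarith [Real.sin_sq_add_cos_sq a]
  have expand1 : ((1 : ℂ) - z⁻¹) * (1 - z) = 2 - (z + z⁻¹) := by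
    field_simp; ring
  have expand2 : ((1 : ℂ) + z) * (1 + z⁻¹) = 2 + (z + z⁻¹) := by
    field_simp; ring
  rw [expand1, expand2, hcos]
  exact_mod_cast htan.symm

lemma cos_ne_zero_frac (m j : ℕ) :
    Real.cos (Real.pi * j / (2 * m + 1)) ≠ 0 := by
  intro h
  rw [Real.cos_eq_zero_iff] at h
  obtain ⟨n, hn⟩ := h
  have hp : (0:ℝ) < 2 * m + 1 := by positivity
  have key : (2 * j : ℝ) = (2 * n + 1) * (2 * m + 1) := by
    field_simp at hn
    nlinarith [hn, Real.pi_pos]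
  have key2 : (2 * (j:ℤ)) = (2 * n + 1) * (2 * m + 1) := by exact_mod_cast key
  have hoo : Odd ((2 * n + 1) * (2 * (m:ℤ) + 1)) :=
    (odd_two_mul_add_one n).mul (odd_two_mul_add_one (m:ℤ))
  rw [← key2] at hoo
  exact (Int.not_odd_iff_even.mpr (even_two_mul _)) hoo

lemma term_eq (m : ℕ) (t j : ℕ) :
    ∏ i ∈ range (2 * t), ∑ d ∈ range (2 * m), (-1 : ℂ) ^ d *
        (((Complex.exp (2 * Real.pi * Complex.I / ((2 * m + 1 : ℕ) : ℂ))) ^ j) ^ (2 * m) ^ i) ^ d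
      = ((Real.tan (Real.pi * j / (2 * m + 1)) ^ (2 * t) : ℝ) : ℂ) := by
  set a : ℝ := Real.pi * j / (2 * m + 1) with ha
  set ζ : ℂ := Complex.exp (2 * Real.pi * Complex.I / ((2 * m + 1 : ℕ) : ℂ)) with hζdef
  have hζ : IsPrimitiveRoot ζ (2 * m + 1) := Complex.isPrimitiveRoot_exp _ (by omega)
  set z : ℂ := ζ ^ j with hzdef
  have hz1 : z ^ (2 * m + 1) = 1 := by
    rw [hzdef, ← pow_mul, mul_comm, pow_mul, hζ.pow_eq_one, one_pow]
  have hze : z = Complex.exp ((2 * a : ℝ) * Complex.I) := by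
    rw [hzdef, hζdef, ← Complex.exp_nat_mul]
    congr 1
    have hp0 : ((2 * m + 1 : ℕ) : ℂ) ≠ 0 := Nat.cast_ne_zero.mpr (by omega)
    rw [ha]
    push_cast at hp0 ⊢
    field_simp
  have hfac : ∀ i ∈ range (2 * t),
      (∑ d ∈ range (2 * m), (-1 : ℂ) ^ d * ((z ^ (2 * m) ^ i) ^ d))
        = if Even i then (∑ d ∈ range (2 * m), (-1 : ℂ) ^ d * z ^ d)
          else (∑ d ∈ range (2 * m), (-1 : ℂ) ^ d * (z⁻¹) ^ d) := by
    intro i _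
    rw [pow_q_pow rfl z hz1 i]
    by_cases h : Even i
    · rw [if_pos h, if_pos h]
    · rw [if_neg h, if_neg h]
  rw [Finset.prod_congr rfl hfac, prod_ite_even,
    G_mul m a (cos_ne_zero_frac m j) z hze hz1]
  rw [← Complex.ofReal_pow, ← pow_mul]

lemma real_sum_sym (m k : ℕ) (hke : Even k) :
    ∑ i ∈ range (2 * m), Real.tan (Real.pi * (i + 1) / (2 * m + 1)) ^ k
      = 2 * ∑ l ∈ Icc 1 m, Real.tan (Real.pi * l / (2 * m + 1)) ^ k := by
  have hfirst : ∑ i ∈ range m, Real.tan (Real.pi * (i + 1) / (2 * m + 1)) ^ k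
      = ∑ l ∈ Icc 1 m, Real.tan (Real.pi * l / (2 * m + 1)) ^ k := by
    rw [show Icc 1 m = Ico 1 (m + 1) by rfl, Finset.sum_Ico_eq_sum_range]
    simp only [Nat.add_sub_cancel]
    refine Finset.sum_congr rfl fun i _ => ?_
    push_cast
    ring_nf
  have hsecond : ∑ i ∈ range m, Real.tan (Real.pi * ((m + i) + 1) / (2 * m + 1)) ^ k
      = ∑ i ∈ range m, Real.tan (Real.pi * (i + 1) / (2 * m + 1)) ^ k := by
    rw [← Finset.sum_range_reflect]
    refine Finset.sum_congr rfl fun i hi => ?_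
    have hi' : i < m := Finset.mem_range.mp hi
    have hc : ((m - 1 - i : ℕ) : ℝ) = (m : ℝ) - 1 - i := by
      have h1 : (m - 1 - i : ℕ) = m - (1 + i) := by omega
      rw [h1, Nat.cast_sub (by omega)]
      push_cast
      ring
    rw [hc]
    have h3 : Real.pi * ((m : ℝ) + ((m : ℝ) - 1 - i) + 1) / (2 * m + 1)
        = Real.pi - Real.pi * (i + 1) / (2 * m + 1) := by
      have hp : (2 * (m:ℝ) + 1) ≠ 0 := by positivity
      field_simp
      ring
    rw [h3, Real.tan_pi_sub, hke.neg_pow]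
  calc ∑ i ∈ range (2 * m), Real.tan (Real.pi * (i + 1) / (2 * m + 1)) ^ k
      = ∑ i ∈ range (m + m), Real.tan (Real.pi * (i + 1) / (2 * m + 1)) ^ k := by
        rw [two_mul]
    _ = ∑ i ∈ range m, Real.tan (Real.pi * (i + 1) / (2 * m + 1)) ^ k
        + ∑ i ∈ range m, Real.tan (Real.pi * ((m + i) + 1) / (2 * m + 1)) ^ k := by
        rw [Finset.sum_range_add]
        congr 1
        refine Finset.sum_congr rfl fun i _ => ?_
        push_cast
        ring_nf
    _ = 2 * ∑ l ∈ Icc 1 m, Real.tan (Real.pi * l / (2 * m + 1)) ^ k := by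
        rw [hsecond, hfirst]; ring

theorem S_even_k (m : ℕ) (hm : 0 < m) (k : ℕ) (hk : 0 < k) (hke : Even k) :
    (S m ((2 * m) ^ k) : ℝ) =
      (2 / (2 * m + 1)) * ∑ l ∈ Finset.Icc 1 m, (Real.tan (Real.pi * l / (2 * m + 1))) ^ k := by
  obtain ⟨t, ht⟩ := hke
  have hkt : k = 2 * t := by omega
  set ζ : ℂ := Complex.exp (2 * Real.pi * Complex.I / ((2 * m + 1 : ℕ) : ℂ)) with hζdef
  have hζ : IsPrimitiveRoot ζ (2 * m + 1) := Complex.isPrimitiveRoot_exp _ (by omega)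
  have hpC : ((2 * m + 1 : ℕ) : ℂ) ≠ 0 := Nat.cast_ne_zero.mpr (by omega)
  have hq1 : 1 < 2 * m := by omega
  -- Step A: root-of-unity filter
  have hA : ((S m ((2 * m) ^ k) : ℤ) : ℂ)
      = (((2 * m + 1 : ℕ) : ℂ))⁻¹ * ∑ j ∈ range (2 * m + 1),
          ∑ n ∈ range ((2 * m) ^ k), (-1 : ℂ) ^ ((Nat.digits (2 * m) n).sum) * (ζ ^ j) ^ n := by
    have swap : ∑ j ∈ range (2 * m + 1),
        ∑ n ∈ range ((2 * m) ^ k), (-1 : ℂ) ^ ((Nat.digits (2 * m) n).sum) * (ζ ^ j) ^ n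
        = ∑ n ∈ range ((2 * m) ^ k), (-1 : ℂ) ^ ((Nat.digits (2 * m) n).sum) *
            (if (2 * m + 1) ∣ n then ((2 * m + 1 : ℕ) : ℂ) else 0) := by
      rw [Finset.sum_comm]
      refine Finset.sum_congr rfl fun n _ => ?_
      have hcomm : ∀ j, (ζ ^ j) ^ n = (ζ ^ n) ^ j := fun j => by
        rw [← pow_mul, mul_comm, pow_mul]
      simp_rw [hcomm]
      rw [← Finset.mul_sum, root_sum (2 * m + 1) ζ hζ n]
    rw [swap, S]
    push_cast
    rw [Finset.mul_sum]
    refine Finset.sum_congr rfl fun n _ => ?_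
    by_cases h : (2 * m + 1) ∣ n
    · rw [if_pos h, if_pos h, mul_comm ((-1 : ℂ) ^ ((Nat.digits (2 * m) n).sum)),
        ← mul_assoc, inv_mul_cancel₀ (show (2 * (m:ℂ) + 1) ≠ 0 by push_cast at hpC; exact hpC),
        one_mul]
    · rw [if_neg h, if_neg h]
      ring
  -- Step B: factor inner sums
  have hB : ∀ j, ∑ n ∈ range ((2 * m) ^ k),
      (-1 : ℂ) ^ ((Nat.digits (2 * m) n).sum) * (ζ ^ j) ^ n
      = ∏ i ∈ range k, ∑ d ∈ range (2 * m), (-1 : ℂ) ^ d * ((ζ ^ j) ^ (2 * m) ^ i) ^ d :=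
    fun j => F_prod (2 * m) hq1 k (ζ ^ j)
  simp_rw [hB] at hA
  -- Step C: the j = 0 term vanishes
  have hzero : ∏ i ∈ range k, ∑ d ∈ range (2 * m), (-1 : ℂ) ^ d * ((ζ ^ 0) ^ (2 * m) ^ i) ^ d
      = 0 := by
    apply Finset.prod_eq_zero (Finset.mem_range.mpr hk)
    rw [pow_zero]
    simp only [one_pow]
    simp only [mul_one]
    rw [neg_one_geom_sum, if_pos (even_two_mul m)]
  -- Step D: evaluate the remaining terms
  rw [Finset.sum_range_succ'] at hA
  rw [hzero, add_zero] at hA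
  have hterm : ∀ i ∈ range (2 * m),
      ∏ i' ∈ range k, ∑ d ∈ range (2 * m), (-1 : ℂ) ^ d * ((ζ ^ (i + 1)) ^ (2 * m) ^ i') ^ d
        = ((Real.tan (Real.pi * (i + 1) / (2 * m + 1)) ^ k : ℝ) : ℂ) := by
    intro i _
    rw [hkt, hζdef]
    have := term_eq m t (i + 1)
    rw [this]
    push_cast
    ring_nf
  rw [Finset.sum_congr rfl hterm] at hA
  have hsum : ∑ i ∈ range (2 * m),
      ((Real.tan (Real.pi * (i + 1) / (2 * m + 1)) ^ k : ℝ) : ℂ)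
      = ((2 * ∑ l ∈ Icc 1 m, Real.tan (Real.pi * l / (2 * m + 1)) ^ k : ℝ) : ℂ) := by
    rw [← Complex.ofReal_sum]
    rw [← real_sum_sym m k ⟨t, ht⟩]
  rw [hsum] at hA
  have final : ((S m ((2 * m) ^ k) : ℤ) : ℂ)
      = (((2 / (2 * m + 1) * ∑ l ∈ Icc 1 m, Real.tan (Real.pi * l / (2 * m + 1)) ^ k : ℝ)) : ℂ) := by
    rw [hA]
    push_cast
    rw [div_eq_mul_inv]
    ring
  exact_mod_cast final
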